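/- Let R be a commutative ring and T a Q-torsion R-module. Then for every R-module M and every natural number n, the R-module Tor_n^R(T, M) is Q-torsion. -/

import Mathlib

open Polynomial TensorProduct

universe u v

/-- An ideal is *semi-regular* if it contains a finitely generated dense subideal
(an ideal is *dense* if its annihilator is zero). -/
def Ideal.IsSemiregular {R : Type*} [CommRing R] (I : Ideal R) : Prop :=
  ∃ J : Ideal R, J ≤ I ∧ J.FG ∧ Submodule.annihilator J = ⊥

/-- A module is *Q-torsion* if every element is annihilated by some finitely
generated semi-regular ideal. -/
def IsQTorsion (R : Type*) (M : Type*) [CommRing R] [AddCommGroup M] [Module R M] : Prop :=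
  ∀ m : M, ∃ I : Ideal R, I.FG ∧ I.IsSemiregular ∧ ∀ a ∈ I, a • m = 0

section Aux

variable {R : Type u} [CommRing R]

lemma Ideal.isSemiregular_top : (⊤ : Ideal R).IsSemiregular := by
  refine ⟨⊤, le_rfl, ⟨{1}, by simp [Ideal.span_singleton_one]⟩, ?_⟩
  rw [Submodule.eq_bot_iff]
  intro a ha
  simpa using (Submodule.mem_annihilator.1 ha) 1 Submodule.mem_top

lemma Ideal.fg_top' : (⊤ : Ideal R).FG := ⟨{1}, by simp [Ideal.span_singleton_one]⟩

lemma Ideal.IsSemiregular.mul {I J : Ideal R} (hI : I.IsSemiregular) (hJ : J.IsSemiregular) :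
    (I * J).IsSemiregular := by
  obtain ⟨I', hI'le, hI'fg, hI'ann⟩ := hI
  obtain ⟨J', hJ'le, hJ'fg, hJ'ann⟩ := hJ
  refine ⟨I' * J', Ideal.mul_mono hI'le hJ'le, Submodule.FG.mul hI'fg hJ'fg, ?_⟩
  rw [Submodule.eq_bot_iff] at hI'ann hJ'ann ⊢
  intro a ha
  rw [Submodule.mem_annihilator] at ha
  refine hI'ann a (Submodule.mem_annihilator.2 fun i hi => ?_)
  refine hJ'ann (a • i) (Submodule.mem_annihilator.2 fun j hj => ?_)
  have := ha (i * j) (Ideal.mul_mem_mul hi hj)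
  simpa [smul_eq_mul, mul_assoc] using this

lemma IsQTorsion.of_injective {A : Type*} {B : Type*} [AddCommGroup A] [Module R A]
    [AddCommGroup B] [Module R B] (f : A →ₗ[R] B) (hf : Function.Injective f)
    (hB : IsQTorsion R B) : IsQTorsion R A := by
  intro a
  obtain ⟨I, hfg, hsr, hann⟩ := hB (f a)
  refine ⟨I, hfg, hsr, fun r hr => hf ?_⟩
  rw [map_smul, hann r hr, map_zero]

lemma IsQTorsion.of_surjective {A : Type*} {B : Type*} [AddCommGroup A] [Module R A]
    [AddCommGroup B] [Module R B] (f : A →ₗ[R] B) (hf : Function.Surjective f)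
    (hA : IsQTorsion R A) : IsQTorsion R B := by
  intro b
  obtain ⟨a, rfl⟩ := hf b
  obtain ⟨I, hfg, hsr, hann⟩ := hA a
  refine ⟨I, hfg, hsr, fun r hr => ?_⟩
  rw [← map_smul, hann r hr, map_zero]

lemma IsQTorsion.tensor {T : Type*} [AddCommGroup T] [Module R T] (hT : IsQTorsion R T)
    (N : Type*) [AddCommGroup N] [Module R N] : IsQTorsion R (TensorProduct R T N) := by
  intro x
  induction x using TensorProduct.induction_on with
  | zero => exact ⟨⊤, Ideal.fg_top', Ideal.isSemiregular_top, fun a _ => smul_zero a⟩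
  | tmul t nn =>
    obtain ⟨I, hfg, hsr, hann⟩ := hT t
    refine ⟨I, hfg, hsr, fun a ha => ?_⟩
    rw [TensorProduct.smul_tmul', hann a ha, TensorProduct.zero_tmul]
  | add x y hx hy =>
    obtain ⟨I, hIfg, hIsr, hI⟩ := hx
    obtain ⟨J, hJfg, hJsr, hJ⟩ := hy
    refine ⟨I * J, Submodule.FG.mul hIfg hJfg, hIsr.mul hJsr, fun a ha => ?_⟩
    rw [smul_add, hI a (Ideal.mul_le_left ha), hJ a (Ideal.mul_le_right ha), add_zero]

end Aux

open CategoryTheory in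
/-- If `T` is a Q-torsion `R`-module, then `Tor_n^R(T, M)` is Q-torsion for every
`R`-module `M` and every `n ∈ ℕ`. -/
theorem statement8 (R : Type u) [CommRing R] (T : Type u) [AddCommGroup T] [Module R T]
    (hT : IsQTorsion R T) (M : Type u) [AddCommGroup M] [Module R M] (n : ℕ) :
    IsQTorsion R (((Tor (ModuleCat.{u} R) n).obj (ModuleCat.of R T)).obj (ModuleCat.of R M)) := by
  classical
  let F := (MonoidalCategory.tensoringLeft (ModuleCat.{u} R)).obj (ModuleCat.of R T)
  let P : ProjectiveResolution (ModuleCat.of R M) := HasProjectiveResolution.out.some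
  let K := (F.mapHomologicalComplex (ComplexShape.down ℕ)).obj P.complex
  -- the Tor object is isomorphic to the homology of `K` at `n`
  let e : ((Tor (ModuleCat.{u} R) n).obj (ModuleCat.of R T)).obj (ModuleCat.of R M) ≅
      K.homology n := P.isoLeftDerivedObj F n
  -- `K.X n` is a tensor product with `T`, hence Q-torsion
  have h1 : IsQTorsion R (K.X n) := IsQTorsion.tensor hT (P.complex.X n)
  -- cycles inject into `K.X n`
  have h2 : IsQTorsion R (K.cycles n) :=
    IsQTorsion.of_injective (K.iCycles n).hom ((ModuleCat.mono_iff_injective _).1 inferInstance) h1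
  -- homology is a quotient of cycles
  have h3 : IsQTorsion R (K.homology n) :=
    IsQTorsion.of_surjective (K.homologyπ n).hom ((ModuleCat.epi_iff_surjective _).1 inferInstance) h2
  exact IsQTorsion.of_surjective e.inv.hom ((ModuleCat.epi_iff_surjective _).1 inferInstance) h3
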